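/- Let (x_1, y_1), …, (x_n, y_n) ∈ ℝ^d × ℝ, w ∈ ℝ^d and s ≥ 0. Then the empirical adversarial risk under Euclidean-norm attacks satisfies the exact identity (1/n) Σ_{i=1}^n sup_{‖δ‖₂ ≤ s} (⟨w, x_i + δ⟩ − y_i)² = (1/n) Σ_{i=1}^n (|⟨w, x_i⟩ − y_i| + s‖w‖₂)². -/

import Mathlib

open Finset

lemma sup_aux {d : ℕ} (w xv : Fin d → ℝ) (yv s : ℝ) (hs : 0 ≤ s) :
    sSup {e : ℝ | ∃ δ : Fin d → ℝ,
        Real.sqrt (∑ j, δ j ^ 2) ≤ s ∧ e = (∑ j, w j * (xv j + δ j) - yv) ^ 2} =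
      (|∑ j, w j * xv j - yv| + s * Real.sqrt (∑ j, w j ^ 2)) ^ 2 := by
  set a := ∑ j, w j * xv j - yv with ha
  set S := ∑ j, w j ^ 2 with hS
  have hS0 : 0 ≤ S := Finset.sum_nonneg fun j _ => sq_nonneg _
  have hW0 : 0 ≤ Real.sqrt S := Real.sqrt_nonneg _
  have hW2 : Real.sqrt S ^ 2 = S := Real.sq_sqrt hS0
  have hrw : ∀ δ : Fin d → ℝ, (∑ j, w j * (xv j + δ j) - yv)
      = a + ∑ j, w j * δ j := by
    intro δ
    simp only [ha, mul_add, Finset.sum_add_distrib]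
    ring
  apply IsGreatest.csSup_eq
  constructor
  · -- membership
    rcases eq_or_lt_of_le hS0 with h0 | hpos
    · -- S = 0, so w = 0
      have hw : ∀ j, w j = 0 := by
        intro j
        have := (Finset.sum_eq_zero_iff_of_nonneg
          (fun j _ => sq_nonneg (w j))).1 h0.symm j (Finset.mem_univ j)
        exact pow_eq_zero_iff (two_ne_zero) |>.1 this
      refine ⟨0, by simpa using hs, ?_⟩
      rw [hrw]
      simp [hw, ← h0, sq_abs]
    · set W := Real.sqrt S with hWdef
      have hWpos : 0 < W := Real.sqrt_pos.2 hpos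
      set σ : ℝ := if 0 ≤ a then 1 else -1 with hσ
      have hσabs : |σ| = 1 := by
        rcases le_or_gt 0 a with h | h
        · simp [hσ, h]
        · simp [hσ, not_le.2 h]
      refine ⟨fun j => σ * s / W * w j, ?_, ?_⟩
      · have : ∑ j, (σ * s / W * w j) ^ 2 = (σ * s / W) ^ 2 * S := by
          rw [hS, Finset.mul_sum]; congr 1; ext j; ring
        rw [this, Real.sqrt_mul (sq_nonneg _), Real.sqrt_sq_eq_abs, hWdef]
        rw [abs_div, abs_mul, hσabs, one_mul, abs_of_nonneg hs]
        rw [abs_of_pos hWpos]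
        rw [div_mul_cancel₀]
        exact ne_of_gt hWpos
      · rw [hrw]
        have hsum : ∑ j, w j * (σ * s / W * w j) = σ * s / W * S := by
          rw [hS, Finset.mul_sum]; congr 1; ext j; ring
        have hSW : S = W * W := by rw [← hW2]; ring
        have hval : σ * s / W * S = σ * s * W := by
          rw [hSW]; field_simp
        rw [hsum, hval]
        rcases le_or_gt 0 a with h | h
        · rw [abs_of_nonneg h]; simp [hσ, h]
        · rw [abs_of_neg h]; simp [hσ, h.not_ge]; ring
  · -- upper bound
    rintro e ⟨δ, hδ, rfl⟩
    rw [hrw]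
    set t := ∑ j, w j * δ j with ht
    have h1 : t ^ 2 ≤ S * ∑ j, δ j ^ 2 := by
      simpa [ht, hS] using Finset.sum_mul_sq_le_sq_mul_sq Finset.univ w δ
    have h2 : |t| ≤ Real.sqrt S * s := by
      have : |t| = Real.sqrt (t ^ 2) := (Real.sqrt_sq_eq_abs t).symm
      rw [this]
      calc Real.sqrt (t ^ 2) ≤ Real.sqrt (S * ∑ j, δ j ^ 2) := Real.sqrt_le_sqrt h1
        _ = Real.sqrt S * Real.sqrt (∑ j, δ j ^ 2) := Real.sqrt_mul hS0 _
        _ ≤ Real.sqrt S * s := by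
            exact mul_le_mul_of_nonneg_left hδ hW0
    have h3 : |a + t| ≤ |a| + s * Real.sqrt S := by
      calc |a + t| ≤ |a| + |t| := abs_add_le _ _
        _ ≤ |a| + s * Real.sqrt S := by
            rw [mul_comm]; exact add_le_add_right h2 _
    calc (a + t) ^ 2 = |a + t| ^ 2 := (sq_abs _).symm
      _ ≤ (|a| + s * Real.sqrt S) ^ 2 := by
          apply pow_le_pow_left₀ (abs_nonneg _) h3

/-- For a finite dataset `(x_1, y_1), …, (x_n, y_n)`, `w ∈ ℝ^d` and
`s ≥ 0`, the empirical adversarial risk under Euclidean-norm attacks satisfies the exact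
identity
`(1/n) ∑ᵢ sup_{‖δ‖₂ ≤ s} (⟨w, xᵢ + δ⟩ − yᵢ)² = (1/n) ∑ᵢ (|⟨w, xᵢ⟩ − yᵢ| + s‖w‖₂)²`. -/
theorem empirical_adversarial_risk_eq
    {n d : ℕ} (hn : 0 < n) (x : Fin n → Fin d → ℝ) (y : Fin n → ℝ)
    (w : Fin d → ℝ) (s : ℝ) (hs : 0 ≤ s) :
    (1 / (n : ℝ)) * ∑ i, sSup {e : ℝ | ∃ δ : Fin d → ℝ,
        Real.sqrt (∑ j, δ j ^ 2) ≤ s ∧ e = (∑ j, w j * (x i j + δ j) - y i) ^ 2} =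
      (1 / (n : ℝ)) * ∑ i,
        (|∑ j, w j * x i j - y i| + s * Real.sqrt (∑ j, w j ^ 2)) ^ 2 := by
  congr 1
  exact Finset.sum_congr rfl fun i _ => sup_aux w (x i) (y i) s hs
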